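/- Let p(·) be a measurable exponent with 0 < p₋ ≤ p₊ < ∞ on a probability space, 0 < q < ∞, and b a slowly varying function. Suppose h_n, f, g ∈ L_{p(·),q,b}, h_n → f almost everywhere, and |h_n| ≤ g almost everywhere for all n. Then ‖h_n − f‖_{p(·),q,b} → 0 (dominated convergence theorem for variable Lorentz-Karamata spaces). -/

import Mathlib

open MeasureTheory Set ENNReal Filter Topology

noncomputable section

/-- A measurable function `b : [1,∞) → (0,∞)` is slowly varying if for every `ε > 0`,
`t ^ ε * b t` is equivalent (up to multiplicative constants) to a nondecreasing function
and `t ^ (-ε) * b t` is equivalent to a nonincreasing function on `[1,∞)`. -/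
def SlowlyVarying (b : ℝ → ℝ) : Prop :=
  (∀ t : ℝ, 1 ≤ t → 0 < b t) ∧
  ∀ ε : ℝ, 0 < ε →
    ((∃ g : ℝ → ℝ, MonotoneOn g (Set.Ici 1) ∧ ∃ c > (0:ℝ), ∃ C > (0:ℝ),
        ∀ t : ℝ, 1 ≤ t → c * g t ≤ t ^ ε * b t ∧ t ^ ε * b t ≤ C * g t) ∧
     (∃ g : ℝ → ℝ, AntitoneOn g (Set.Ici 1) ∧ ∃ c > (0:ℝ), ∃ C > (0:ℝ),
        ∀ t : ℝ, 1 ≤ t → c * g t ≤ t ^ (-ε) * b t ∧ t ^ (-ε) * b t ≤ C * g t))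

/-- `γ_b(t) = b (max {t, t⁻¹})` for `t > 0`. -/
def gammaB (b : ℝ → ℝ) (t : ℝ) : ℝ := b (max t t⁻¹)

variable {Ω : Type*} [MeasurableSpace Ω]

/-- The variable Lebesgue quasi-norm
`‖f‖_{p(·)} = inf {λ > 0 : ∫ (|f|/λ)^{p(·)} dμ ≤ 1}`. -/
def vLpNorm (μ : Measure Ω) (p : Ω → ℝ) (f : Ω → ℝ) : ℝ :=
  sInf {lam : ℝ | 0 < lam ∧ ∫⁻ ω, ENNReal.ofReal ((|f ω| / lam) ^ p ω) ∂μ ≤ 1}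

/-- `f ∈ L_{p(·)}` : the modular is finite for some `λ > 0`. -/
def MemVLp (μ : Measure Ω) (p : Ω → ℝ) (f : Ω → ℝ) : Prop :=
  ∃ lam > (0:ℝ), ∫⁻ ω, ENNReal.ofReal ((|f ω| / lam) ^ p ω) ∂μ ≤ 1

/-- `‖χ_A‖_{p(·)}`. -/
def chiNorm (μ : Measure Ω) (p : Ω → ℝ) (A : Set Ω) : ℝ :=
  vLpNorm μ p (A.indicator 1)

/-- The variable Lorentz–Karamata quasi-norm `‖f‖_{p(·),q,b}` (with `q ∈ (0,∞]`). -/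
def vLKNorm (μ : Measure Ω) (p : Ω → ℝ) (q : ℝ≥0∞) (b : ℝ → ℝ) (f : Ω → ℝ) : ℝ≥0∞ :=
  if q = ∞ then
    ⨆ t ∈ Set.Ioi (0:ℝ), ENNReal.ofReal
      (t * chiNorm μ p {ω | t < |f ω|} * gammaB b (chiNorm μ p {ω | t < |f ω|}))
  else
    (∫⁻ t in Set.Ioi (0:ℝ), ENNReal.ofReal
      ((t * chiNorm μ p {ω | t < |f ω|} * gammaB b (chiNorm μ p {ω | t < |f ω|})) ^ q.toReal / t))
      ^ (1 / q.toReal)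

set_option linter.unusedSectionVars false
namespace Aux

def AdmSet (μ : Measure Ω) (p : Ω → ℝ) (A : Set Ω) : Set ℝ :=
  {lam : ℝ | 0 < lam ∧ ∫⁻ ω, ENNReal.ofReal ((|A.indicator (1 : Ω → ℝ) ω| / lam) ^ p ω) ∂μ ≤ 1}

theorem chiNorm_eq (μ : Measure Ω) (p : Ω → ℝ) (A : Set Ω) :
    chiNorm μ p A = sInf (AdmSet μ p A) := rfl

theorem adm_bddBelow (μ : Measure Ω) (p : Ω → ℝ) (A : Set Ω) : BddBelow (AdmSet μ p A) :=
  ⟨0, fun _ hx => hx.1.le⟩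

theorem chiNorm_nonneg (μ : Measure Ω) (p : Ω → ℝ) (A : Set Ω) : 0 ≤ chiNorm μ p A :=
  Real.sInf_nonneg (fun _ hx => hx.1.le)

variable {μ : Measure Ω} [IsProbabilityMeasure μ] {p : Ω → ℝ}

theorem abs_indicator_le_one (A : Set Ω) (ω : Ω) : |A.indicator (1 : Ω → ℝ) ω| ≤ 1 := by
  by_cases h : ω ∈ A <;> simp [Set.indicator_apply, h]

theorem abs_indicator_nonneg (A : Set Ω) (ω : Ω) : 0 ≤ |A.indicator (1 : Ω → ℝ) ω| := abs_nonneg _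

theorem one_mem_adm (hp0 : ∀ᵐ ω ∂μ, 0 < p ω) (A : Set Ω) : (1:ℝ) ∈ AdmSet μ p A := by
  refine ⟨one_pos, ?_⟩
  calc ∫⁻ ω, ENNReal.ofReal ((|A.indicator (1 : Ω → ℝ) ω| / 1) ^ p ω) ∂μ
      ≤ ∫⁻ _, 1 ∂μ := by
        refine lintegral_mono_ae (hp0.mono fun ω hω => ?_)
        rw [div_one]
        calc ENNReal.ofReal (|A.indicator (1 : Ω → ℝ) ω| ^ p ω)
            ≤ ENNReal.ofReal 1 := by
              exact ENNReal.ofReal_le_ofReal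
                (Real.rpow_le_one (abs_indicator_nonneg A ω) (abs_indicator_le_one A ω) hω.le)
          _ = 1 := ENNReal.ofReal_one
    _ = 1 := by simp
  
theorem adm_nonempty (hp0 : ∀ᵐ ω ∂μ, 0 < p ω) (A : Set Ω) : (AdmSet μ p A).Nonempty :=
  ⟨1, one_mem_adm hp0 A⟩

theorem chiNorm_le_of_mem {A : Set Ω} {lam : ℝ} (h : lam ∈ AdmSet μ p A) :
    chiNorm μ p A ≤ lam := csInf_le (adm_bddBelow μ p A) h

theorem chiNorm_le_one (hp0 : ∀ᵐ ω ∂μ, 0 < p ω) (A : Set Ω) : chiNorm μ p A ≤ 1 :=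
  chiNorm_le_of_mem (one_mem_adm hp0 A)

theorem adm_antitone (hp0 : ∀ᵐ ω ∂μ, 0 < p ω) {A B : Set Ω}
    (hsub : ∀ᵐ ω ∂μ, ω ∈ A → ω ∈ B) : AdmSet μ p B ⊆ AdmSet μ p A := by
  rintro lam ⟨hl, hint⟩
  refine ⟨hl, le_trans (lintegral_mono_ae ((hp0.and hsub).mono fun ω hω => ?_)) hint⟩
  by_cases hA : ω ∈ A
  · have hB := hω.2 hA
    rw [Set.indicator_of_mem hA, Set.indicator_of_mem hB]
  · rw [Set.indicator_of_notMem hA, abs_zero, zero_div, Real.zero_rpow hω.1.ne',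
      ENNReal.ofReal_zero]
    exact zero_le

theorem chiNorm_mono_ae (hp0 : ∀ᵐ ω ∂μ, 0 < p ω) {A B : Set Ω}
    (hsub : ∀ᵐ ω ∂μ, ω ∈ A → ω ∈ B) : chiNorm μ p A ≤ chiNorm μ p B :=
  csInf_le_csInf (adm_bddBelow μ p A) (adm_nonempty hp0 B) (adm_antitone hp0 hsub)

end Aux

namespace Aux

variable {Ω : Type*} [MeasurableSpace Ω]
variable {μ : Measure Ω} [IsProbabilityMeasure μ] {p : Ω → ℝ} {pl pu : ℝ}

theorem chiNorm_le_of_measure (hpl : 0 < pl) (hple : pl ≤ pu)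
    (hpb : ∀ᵐ ω ∂μ, pl ≤ p ω ∧ p ω ≤ pu) {A : Set Ω} (hA : MeasurableSet A)
    {ε : ℝ} (hε : 0 < ε) (hε1 : ε ≤ 1) (hμA : μ A ≤ ENNReal.ofReal (ε ^ pu)) :
    chiNorm μ p A ≤ ε := by
  refine chiNorm_le_of_mem ⟨hε, ?_⟩
  have hbound : ∫⁻ ω, ENNReal.ofReal ((|A.indicator (1 : Ω → ℝ) ω| / ε) ^ p ω) ∂μ
      ≤ ∫⁻ ω, A.indicator (fun _ => ENNReal.ofReal (ε ^ (-pu))) ω ∂μ := by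
    refine lintegral_mono_ae (hpb.mono fun ω hω => ?_)
    by_cases hmem : ω ∈ A
    · rw [Set.indicator_of_mem hmem, Set.indicator_of_mem hmem, Pi.one_apply, abs_one]
      refine ENNReal.ofReal_le_ofReal ?_
      have h1ε : (1:ℝ) ≤ 1 / ε := by
        rw [le_div_iff₀ hε]; linarith
      calc (1 / ε) ^ p ω ≤ (1 / ε) ^ pu := Real.rpow_le_rpow_of_exponent_le h1ε hω.2
        _ = ε ^ (-pu) := by
            rw [one_div, ← Real.rpow_neg_one ε, ← Real.rpow_mul hε.le]
            ring_nf
    · rw [Set.indicator_of_notMem hmem, Set.indicator_of_notMem hmem, abs_zero, zero_div,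
        Real.zero_rpow (by linarith [hω.1] : p ω ≠ 0), ENNReal.ofReal_zero]
  refine hbound.trans ?_
  rw [lintegral_indicator_const hA]
  calc ENNReal.ofReal (ε ^ (-pu)) * μ A ≤ ENNReal.ofReal (ε ^ (-pu)) * ENNReal.ofReal (ε ^ pu) :=
        mul_le_mul_right hμA _
    _ = ENNReal.ofReal (ε ^ (-pu) * ε ^ pu) :=
        (ENNReal.ofReal_mul (Real.rpow_nonneg hε.le _)).symm
    _ = 1 := by rw [← Real.rpow_add hε, neg_add_cancel, Real.rpow_zero, ENNReal.ofReal_one]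

theorem adm_union (hpl : 0 < pl) (hpb : ∀ᵐ ω ∂μ, pl ≤ p ω ∧ p ω ≤ pu)
    {A B : Set Ω} (hA : MeasurableSet A) {lamA lamB : ℝ}
    (hlA : lamA ∈ AdmSet μ p A) (hlB : lamB ∈ AdmSet μ p B) :
    ((2:ℝ) ^ (pl⁻¹ : ℝ) * max lamA lamB) ∈ AdmSet μ p (A ∪ B) := by
  set K : ℝ := (2:ℝ) ^ (pl⁻¹ : ℝ) with hKdef
  have hK1 : 1 < K := by
    rw [hKdef]
    exact Real.one_lt_rpow_iff_of_pos (by norm_num) |>.mpr (Or.inl ⟨one_lt_two, by positivity⟩)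
  obtain ⟨hlA0, hintA⟩ := hlA
  obtain ⟨hlB0, hintB⟩ := hlB
  have hK0 : (0:ℝ) < K := lt_trans one_pos hK1
  have hmax0 : 0 < max lamA lamB := lt_max_of_lt_left hlA0
  have hlam0 : 0 < K * max lamA lamB := by positivity
  refine ⟨hlam0, ?_⟩
  have key : ∀ lamX : ℝ, 0 < lamX → lamX ≤ max lamA lamB → ∀ ω, pl ≤ p ω →
      (1 / (K * max lamA lamB)) ^ p ω ≤ 2⁻¹ * (1 / lamX) ^ p ω := by
    intro lamX hX hXle ω hpω
    have hr : lamX / (K * max lamA lamB) ≤ K⁻¹ := by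
      rw [div_le_iff₀ hlam0]
      calc lamX ≤ max lamA lamB := hXle
        _ = K⁻¹ * (K * max lamA lamB) := by field_simp
    have h1 : (1:ℝ)/(K * max lamA lamB) = (lamX/(K * max lamA lamB)) * (1/lamX) := by
      field_simp
    rw [h1, Real.mul_rpow (by positivity) (by positivity)]
    have h2 : (lamX/(K * max lamA lamB)) ^ p ω ≤ (K⁻¹) ^ p ω :=
      Real.rpow_le_rpow (by positivity) hr (le_trans hpl.le hpω)
    have h3 : (K⁻¹) ^ p ω ≤ (K⁻¹) ^ pl :=
      Real.rpow_le_rpow_of_exponent_ge (by positivity)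
        (by rw [inv_le_one_iff₀]; right; exact hK1.le) hpω
    have h4 : (K⁻¹:ℝ) ^ pl = 2⁻¹ := by
      rw [hKdef, ← Real.rpow_neg (by norm_num : (0:ℝ) ≤ 2),
        ← Real.rpow_mul (by norm_num : (0:ℝ) ≤ 2),
        show (-(pl⁻¹) * pl) = -1 by field_simp, Real.rpow_neg_one]
    exact mul_le_mul_of_nonneg_right ((h2.trans h3).trans_eq h4) (Real.rpow_nonneg (by positivity) _)
  set F : Ω → ℝ≥0∞ :=
    fun ω => ENNReal.ofReal ((|(A ∪ B).indicator (1 : Ω → ℝ) ω| / (K * max lamA lamB)) ^ p ω)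
    with hF
  have half_pull : ∀ (ν : Measure Ω) (G : Ω → ℝ≥0∞),
      ∫⁻ ω, ENNReal.ofReal 2⁻¹ * G ω ∂ν = ENNReal.ofReal 2⁻¹ * ∫⁻ ω, G ω ∂ν :=
    fun ν G => lintegral_const_mul' _ _ ENNReal.ofReal_ne_top
  have hFA : ∫⁻ ω in A, F ω ∂μ ≤ ENNReal.ofReal 2⁻¹ := by
    have step : ∫⁻ ω in A, F ω ∂μ ≤ ∫⁻ ω in A, ENNReal.ofReal 2⁻¹ *
        ENNReal.ofReal ((|A.indicator (1 : Ω → ℝ) ω| / lamA) ^ p ω) ∂μ := by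
      refine lintegral_mono_ae ?_
      filter_upwards [ae_restrict_mem hA, ae_restrict_of_ae hpb] with ω hmem hpω
      simp only [hF]
      rw [Set.indicator_of_mem (Set.mem_union_left B hmem), Set.indicator_of_mem hmem,
        Pi.one_apply, abs_one, ← ENNReal.ofReal_mul (by norm_num : (0:ℝ) ≤ 2⁻¹)]
      exact ENNReal.ofReal_le_ofReal (key lamA hlA0 (le_max_left _ _) ω hpω.1)
    refine step.trans ?_
    rw [half_pull]
    calc ENNReal.ofReal 2⁻¹ * ∫⁻ ω in A, ENNReal.ofReal ((|A.indicator (1:Ω→ℝ) ω| / lamA) ^ p ω) ∂μ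
        ≤ ENNReal.ofReal 2⁻¹ * 1 :=
          mul_le_mul_right (le_trans (lintegral_mono' Measure.restrict_le_self le_rfl) hintA) _
      _ = ENNReal.ofReal 2⁻¹ := mul_one _
  have hFAc : ∫⁻ ω in Aᶜ, F ω ∂μ ≤ ENNReal.ofReal 2⁻¹ := by
    have step : ∫⁻ ω in Aᶜ, F ω ∂μ ≤ ∫⁻ ω in Aᶜ, ENNReal.ofReal 2⁻¹ *
        ENNReal.ofReal ((|B.indicator (1 : Ω → ℝ) ω| / lamB) ^ p ω) ∂μ := by
      refine lintegral_mono_ae ?_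
      filter_upwards [ae_restrict_mem hA.compl, ae_restrict_of_ae hpb] with ω hmem hpω
      simp only [hF]
      by_cases hB : ω ∈ B
      · rw [Set.indicator_of_mem (Set.mem_union_right A hB), Set.indicator_of_mem hB,
          Pi.one_apply, abs_one, ← ENNReal.ofReal_mul (by norm_num : (0:ℝ) ≤ 2⁻¹)]
        exact ENNReal.ofReal_le_ofReal (key lamB hlB0 (le_max_right _ _) ω hpω.1)
      · have hnAB : ω ∉ A ∪ B := by
          intro hc
          rcases hc with hc | hc
          · exact hmem hc
          · exact hB hc
        rw [Set.indicator_of_notMem hnAB, abs_zero, zero_div,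
          Real.zero_rpow (by linarith [hpω.1] : p ω ≠ 0), ENNReal.ofReal_zero]
        exact zero_le
    refine step.trans ?_
    rw [half_pull]
    calc ENNReal.ofReal 2⁻¹ * ∫⁻ ω in Aᶜ, ENNReal.ofReal ((|B.indicator (1:Ω→ℝ) ω| / lamB) ^ p ω) ∂μ
        ≤ ENNReal.ofReal 2⁻¹ * 1 :=
          mul_le_mul_right (le_trans (lintegral_mono' Measure.restrict_le_self le_rfl) hintB) _
      _ = ENNReal.ofReal 2⁻¹ := mul_one _
  calc ∫⁻ ω, F ω ∂μ = ∫⁻ ω in A, F ω ∂μ + ∫⁻ ω in Aᶜ, F ω ∂μ := (lintegral_add_compl F hA).symm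
    _ ≤ ENNReal.ofReal 2⁻¹ + ENNReal.ofReal 2⁻¹ := add_le_add hFA hFAc
    _ = 1 := by rw [← ENNReal.ofReal_add (by norm_num) (by norm_num)]; norm_num

theorem chiNorm_union_le (hpl : 0 < pl) (hpb : ∀ᵐ ω ∂μ, pl ≤ p ω ∧ p ω ≤ pu)
    {A B : Set Ω} (hA : MeasurableSet A) :
    chiNorm μ p (A ∪ B) ≤ (2:ℝ) ^ (pl⁻¹ : ℝ) * (chiNorm μ p A + chiNorm μ p B) := by
  have hp0 : ∀ᵐ ω ∂μ, 0 < p ω := hpb.mono fun ω hω => lt_of_lt_of_le hpl hω.1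
  have hK0 : (0:ℝ) < 2 ^ (pl⁻¹ : ℝ) := Real.rpow_pos_of_pos (by norm_num) _
  refine le_of_forall_pos_le_add fun ε hε => ?_
  set ε' := ε / (2 * 2 ^ (pl⁻¹ : ℝ)) with hε'def
  have hε'0 : 0 < ε' := by positivity
  obtain ⟨lamA, hlamA, hlamAlt⟩ :=
    (csInf_lt_iff (adm_bddBelow μ p A) (adm_nonempty hp0 A)).mp
      (lt_add_of_pos_right _ hε'0 : sInf (AdmSet μ p A) < sInf (AdmSet μ p A) + ε')
  obtain ⟨lamB, hlamB, hlamBlt⟩ :=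
    (csInf_lt_iff (adm_bddBelow μ p B) (adm_nonempty hp0 B)).mp
      (lt_add_of_pos_right _ hε'0 : sInf (AdmSet μ p B) < sInf (AdmSet μ p B) + ε')
  have hmem := adm_union hpl hpb hA hlamA hlamB
  have h1 : chiNorm μ p (A ∪ B) ≤ (2:ℝ) ^ (pl⁻¹ : ℝ) * max lamA lamB := chiNorm_le_of_mem hmem
  have h2 : max lamA lamB ≤ lamA + lamB := max_le (by linarith [hlamB.1.le]) (by linarith [hlamA.1.le])
  have h3 : lamA + lamB ≤ chiNorm μ p A + chiNorm μ p B + 2 * ε' := by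
    rw [chiNorm_eq, chiNorm_eq]
    linarith
  calc chiNorm μ p (A ∪ B) ≤ (2:ℝ) ^ (pl⁻¹ : ℝ) * (lamA + lamB) :=
        h1.trans (mul_le_mul_of_nonneg_left h2 hK0.le)
    _ ≤ (2:ℝ) ^ (pl⁻¹ : ℝ) * (chiNorm μ p A + chiNorm μ p B + 2 * ε') :=
        mul_le_mul_of_nonneg_left h3 hK0.le
    _ = (2:ℝ) ^ (pl⁻¹ : ℝ) * (chiNorm μ p A + chiNorm μ p B) + ε := by
        rw [hε'def]; field_simp

end Aux

namespace Aux

structure SVData (b g₁ g₂ : ℝ → ℝ) (c₁ C₁ c₂ C₂ : ℝ) : Prop where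
  hbpos : ∀ t : ℝ, 1 ≤ t → 0 < b t
  hg₁ : MonotoneOn g₁ (Set.Ici 1)
  hg₂ : AntitoneOn g₂ (Set.Ici 1)
  hc₁ : 0 < c₁
  hC₁ : 0 < C₁
  hc₂ : 0 < c₂
  hC₂ : 0 < C₂
  bd₁ : ∀ t : ℝ, 1 ≤ t → c₁ * g₁ t ≤ t ^ (2⁻¹:ℝ) * b t ∧ t ^ (2⁻¹:ℝ) * b t ≤ C₁ * g₁ t
  bd₂ : ∀ t : ℝ, 1 ≤ t → c₂ * g₂ t ≤ t ^ (-2⁻¹:ℝ) * b t ∧ t ^ (-2⁻¹:ℝ) * b t ≤ C₂ * g₂ t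

/-- The measurable envelope `e(c) = √c · g₂(1/c)`. -/
def eF (g₂ : ℝ → ℝ) (c : ℝ) : ℝ := c ^ (2⁻¹:ℝ) * g₂ c⁻¹

variable {b g₁ g₂ : ℝ → ℝ} {c₁ C₁ c₂ C₂ : ℝ}

theorem SVData.g₂_pos (h : SVData b g₁ g₂ c₁ C₁ c₂ C₂) {s : ℝ} (hs : 1 ≤ s) : 0 < g₂ s := by
  have h1 := (h.bd₂ s hs).2
  have h2 : 0 < s ^ (-2⁻¹:ℝ) * b s :=
    mul_pos (Real.rpow_pos_of_pos (by linarith) _) (h.hbpos s hs)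
  nlinarith [h.hC₂]

theorem SVData.g₁_pos (h : SVData b g₁ g₂ c₁ C₁ c₂ C₂) {s : ℝ} (hs : 1 ≤ s) : 0 < g₁ s := by
  have h1 := (h.bd₁ s hs).2
  have h2 : 0 < s ^ (2⁻¹:ℝ) * b s :=
    mul_pos (Real.rpow_pos_of_pos (by linarith) _) (h.hbpos s hs)
  nlinarith [h.hC₁]

theorem one_le_inv_of {c : ℝ} (hc : 0 < c) (hc1 : c ≤ 1) : 1 ≤ c⁻¹ := by
  rw [le_inv_comm₀ one_pos hc]; simpa using hc1

theorem inv_rpow_neg_half {c : ℝ} (hc : 0 < c) : (c⁻¹) ^ (-2⁻¹:ℝ) = c ^ (2⁻¹:ℝ) := by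
  rw [Real.rpow_neg (by positivity), Real.inv_rpow hc.le, inv_inv]

theorem inv_rpow_half {c : ℝ} (hc : 0 < c) : (c⁻¹) ^ (2⁻¹:ℝ) = (c ^ (2⁻¹:ℝ))⁻¹ :=
  Real.inv_rpow hc.le _

theorem rpow_half_sq {c : ℝ} (hc : 0 < c) : c ^ (2⁻¹:ℝ) * c ^ (2⁻¹:ℝ) = c := by
  rw [← Real.rpow_add hc]; norm_num

theorem eF_zero : eF g₂ 0 = 0 := by
  simp [eF, Real.zero_rpow (by norm_num : (2⁻¹:ℝ) ≠ 0)]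

theorem eF_nonneg (h : SVData b g₁ g₂ c₁ C₁ c₂ C₂) {c : ℝ} (hc : 0 ≤ c) (hc1 : c ≤ 1) :
    0 ≤ eF g₂ c := by
  rcases eq_or_lt_of_le hc with rfl | hc0
  · rw [eF_zero]
  · exact le_of_lt (mul_pos (Real.rpow_pos_of_pos hc0 _) (h.g₂_pos (one_le_inv_of hc0 hc1)))

theorem eF_pos (h : SVData b g₁ g₂ c₁ C₁ c₂ C₂) {c : ℝ} (hc : 0 < c) (hc1 : c ≤ 1) :
    0 < eF g₂ c :=
  mul_pos (Real.rpow_pos_of_pos hc _) (h.g₂_pos (one_le_inv_of hc hc1))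

theorem phi_le (h : SVData b g₁ g₂ c₁ C₁ c₂ C₂) {c : ℝ} (hc : 0 < c) (hc1 : c ≤ 1) :
    c * b c⁻¹ ≤ C₂ * eF g₂ c := by
  have hs : 1 ≤ c⁻¹ := one_le_inv_of hc hc1
  have hineq := (h.bd₂ c⁻¹ hs).2
  rw [inv_rpow_neg_half hc] at hineq
  have hXnn : (0:ℝ) ≤ c ^ (2⁻¹:ℝ) := (Real.rpow_pos_of_pos hc _).le
  calc c * b c⁻¹ = c ^ (2⁻¹:ℝ) * (c ^ (2⁻¹:ℝ) * b c⁻¹) := by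
        rw [← mul_assoc, rpow_half_sq hc]
    _ ≤ c ^ (2⁻¹:ℝ) * (C₂ * g₂ c⁻¹) := mul_le_mul_of_nonneg_left hineq hXnn
    _ = C₂ * eF g₂ c := by rw [eF]; ring

theorem phi_ge (h : SVData b g₁ g₂ c₁ C₁ c₂ C₂) {c : ℝ} (hc : 0 < c) (hc1 : c ≤ 1) :
    c₂ * eF g₂ c ≤ c * b c⁻¹ := by
  have hs : 1 ≤ c⁻¹ := one_le_inv_of hc hc1
  have hineq := (h.bd₂ c⁻¹ hs).1
  rw [inv_rpow_neg_half hc] at hineq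
  have hXnn : (0:ℝ) ≤ c ^ (2⁻¹:ℝ) := (Real.rpow_pos_of_pos hc _).le
  calc c₂ * eF g₂ c = c ^ (2⁻¹:ℝ) * (c₂ * g₂ c⁻¹) := by rw [eF]; ring
    _ ≤ c ^ (2⁻¹:ℝ) * (c ^ (2⁻¹:ℝ) * b c⁻¹) := mul_le_mul_of_nonneg_left hineq hXnn
    _ = c * b c⁻¹ := by rw [← mul_assoc, rpow_half_sq hc]

theorem eF_mono (h : SVData b g₁ g₂ c₁ C₁ c₂ C₂) {c c' : ℝ} (hc : 0 ≤ c) (hcc : c ≤ c')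
    (hc1 : c' ≤ 1) : eF g₂ c ≤ eF g₂ c' := by
  rcases eq_or_lt_of_le hc with rfl | hc0
  · rw [eF_zero]; exact eF_nonneg h (hc.trans hcc) hc1
  · have hc'0 : 0 < c' := lt_of_lt_of_le hc0 hcc
    have hinv : c'⁻¹ ≤ c⁻¹ := by gcongr
    refine mul_le_mul (Real.rpow_le_rpow hc0.le hcc (by norm_num))
      (h.hg₂ (Set.mem_Ici.mpr (one_le_inv_of hc'0 hc1))
        (Set.mem_Ici.mpr ((one_le_inv_of hc'0 hc1).trans hinv)) hinv)
      (h.g₂_pos ((one_le_inv_of hc'0 hc1).trans hinv)).le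
      (Real.rpow_pos_of_pos hc'0 _).le

theorem eF_le_sqrt (h : SVData b g₁ g₂ c₁ C₁ c₂ C₂) {c : ℝ} (hc : 0 ≤ c) (hc1 : c ≤ 1) :
    eF g₂ c ≤ c ^ (2⁻¹:ℝ) * g₂ 1 := by
  rcases eq_or_lt_of_le hc with rfl | hc0
  · rw [eF_zero, Real.zero_rpow (by norm_num : (2⁻¹:ℝ) ≠ 0), zero_mul]
  · exact mul_le_mul_of_nonneg_left
      (h.hg₂ (Set.mem_Ici.mpr le_rfl) (Set.mem_Ici.mpr (one_le_inv_of hc0 hc1))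
        (one_le_inv_of hc0 hc1)) (Real.rpow_pos_of_pos hc0 _).le

theorem eF_doubling (h : SVData b g₁ g₂ c₁ C₁ c₂ C₂) {K c c' : ℝ} (hK : 1 ≤ K)
    (hc : 0 < c) (hc' : 0 < c') (hc1 : c ≤ 1) (hc1' : c' ≤ 1) (hcc : c ≤ K * c') :
    eF g₂ c ≤ (1 + C₁ * C₂ / (c₁ * c₂) * (K ^ (2⁻¹:ℝ)) ^ 3) * eF g₂ c' := by
  have hK0 : (0:ℝ) < K := lt_of_lt_of_le one_pos hK
  have hk0 : (0:ℝ) < K ^ (2⁻¹:ℝ) := Real.rpow_pos_of_pos hK0 _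
  have hcoef : (0:ℝ) ≤ C₁ * C₂ / (c₁ * c₂) * (K ^ (2⁻¹:ℝ)) ^ 3 := by
    have := h.hc₁; have := h.hc₂; have := h.hC₁; have := h.hC₂; positivity
  rcases le_or_gt c c' with hle | hlt
  · refine (eF_mono h hc.le hle hc1').trans (le_mul_of_one_le_left (eF_nonneg h hc'.le hc1') ?_)
    linarith
  · -- c' < c, use g₁ to move up
    set x := c ^ (2⁻¹:ℝ) with hxdef
    set y := c' ^ (2⁻¹:ℝ) with hydef
    set k := K ^ (2⁻¹:ℝ) with hkdef
    have hx : 0 < x := Real.rpow_pos_of_pos hc _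
    have hy : 0 < y := Real.rpow_pos_of_pos hc' _
    have hs : 1 ≤ c⁻¹ := one_le_inv_of hc hc1
    have hs' : 1 ≤ c'⁻¹ := one_le_inv_of hc' hc1'
    have hxy : x ≤ k * y := by
      rw [hxdef, hydef, hkdef, ← Real.mul_rpow hK0.le hc'.le]
      exact Real.rpow_le_rpow hc.le hcc (by norm_num)
    have hB0 : 0 < b c⁻¹ := h.hbpos _ hs
    have hB'0 : 0 < b c'⁻¹ := h.hbpos _ hs'
    have hg₂c : 0 < g₂ c⁻¹ := h.g₂_pos hs
    have hg₂c' : 0 < g₂ c'⁻¹ := h.g₂_pos hs'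
    have hg₁c : 0 < g₁ c⁻¹ := h.g₁_pos hs
    have hg₁c' : 0 < g₁ c'⁻¹ := h.g₁_pos hs'
    -- basic inequalities
    have hG : c₂ * g₂ c⁻¹ ≤ x * b c⁻¹ := by
      have := (h.bd₂ c⁻¹ hs).1; rwa [inv_rpow_neg_half hc] at this
    have hB : x⁻¹ * b c⁻¹ ≤ C₁ * g₁ c⁻¹ := by
      have := (h.bd₁ c⁻¹ hs).2; rwa [inv_rpow_half hc] at this
    have hu : g₁ c⁻¹ ≤ g₁ c'⁻¹ := by
      have hinv : c⁻¹ ≤ c'⁻¹ := by gcongr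
      exact h.hg₁ (Set.mem_Ici.mpr hs) (Set.mem_Ici.mpr hs') hinv
    have hu' : c₁ * g₁ c'⁻¹ ≤ y⁻¹ * b c'⁻¹ := by
      have := (h.bd₁ c'⁻¹ hs').1; rwa [inv_rpow_half hc'] at this
    have hB' : y * b c'⁻¹ ≤ C₂ * g₂ c'⁻¹ := by
      have := (h.bd₂ c'⁻¹ hs').2; rwa [inv_rpow_neg_half hc'] at this
    -- rearranged versions
    have hGc : g₂ c⁻¹ ≤ c₂⁻¹ * (x * b c⁻¹) := by
      rw [← mul_le_mul_iff_right₀ h.hc₂]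
      calc c₂ * g₂ c⁻¹ ≤ x * b c⁻¹ := hG
        _ = c₂ * (c₂⁻¹ * (x * b c⁻¹)) := by field_simp [h.hc₂.ne']
    have hBc : b c⁻¹ ≤ x * (C₁ * g₁ c⁻¹) := by
      rw [show b c⁻¹ = x * (x⁻¹ * b c⁻¹) by field_simp [hx.ne']]
      exact mul_le_mul_of_nonneg_left hB hx.le
    have hu'c : g₁ c'⁻¹ ≤ c₁⁻¹ * (y⁻¹ * b c'⁻¹) := by
      rw [← mul_le_mul_iff_right₀ h.hc₁]
      calc c₁ * g₁ c'⁻¹ ≤ y⁻¹ * b c'⁻¹ := hu'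
        _ = c₁ * (c₁⁻¹ * (y⁻¹ * b c'⁻¹)) := by field_simp [h.hc₁.ne']
    have hB'c : b c'⁻¹ ≤ y⁻¹ * (C₂ * g₂ c'⁻¹) := by
      rw [show b c'⁻¹ = y⁻¹ * (y * b c'⁻¹) by field_simp [hy.ne']]
      exact mul_le_mul_of_nonneg_left hB' (inv_pos.mpr hy).le
    have hC₁ := h.hC₁; have hC₂ := h.hC₂; have hc₁ := h.hc₁; have hc₂ := h.hc₂
    calc eF g₂ c = x * g₂ c⁻¹ := rfl
      _ ≤ x * (c₂⁻¹ * (x * b c⁻¹)) := mul_le_mul_of_nonneg_left hGc hx.le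
      _ = (c₂⁻¹ * x ^ 2) * b c⁻¹ := by ring
      _ ≤ (c₂⁻¹ * x ^ 2) * (x * (C₁ * g₁ c⁻¹)) := by
          refine mul_le_mul_of_nonneg_left hBc ?_; positivity
      _ = (C₁ * c₂⁻¹ * x ^ 3) * g₁ c⁻¹ := by ring
      _ ≤ (C₁ * c₂⁻¹ * x ^ 3) * g₁ c'⁻¹ := by
          refine mul_le_mul_of_nonneg_left hu ?_; positivity
      _ ≤ (C₁ * c₂⁻¹ * x ^ 3) * (c₁⁻¹ * (y⁻¹ * b c'⁻¹)) := by
          refine mul_le_mul_of_nonneg_left hu'c ?_; positivity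
      _ = (C₁ * c₁⁻¹ * c₂⁻¹ * x ^ 3 * y⁻¹) * b c'⁻¹ := by ring
      _ ≤ (C₁ * c₁⁻¹ * c₂⁻¹ * x ^ 3 * y⁻¹) * (y⁻¹ * (C₂ * g₂ c'⁻¹)) := by
          refine mul_le_mul_of_nonneg_left hB'c ?_; positivity
      _ = (C₁ * C₂ * c₁⁻¹ * c₂⁻¹) * (x ^ 3 * (y⁻¹) ^ 2) * g₂ c'⁻¹ := by ring
      _ ≤ (C₁ * C₂ * c₁⁻¹ * c₂⁻¹) * ((k * y) ^ 3 * (y⁻¹) ^ 2) * g₂ c'⁻¹ := by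
          have hx3 : x ^ 3 ≤ (k * y) ^ 3 := pow_le_pow_left₀ hx.le hxy 3
          exact mul_le_mul_of_nonneg_right (mul_le_mul_of_nonneg_left
            (mul_le_mul_of_nonneg_right hx3 (by positivity)) (by positivity)) hg₂c'.le
      _ = (C₁ * C₂ / (c₁ * c₂) * k ^ 3) * (y * g₂ c'⁻¹) := by
          field_simp [hy.ne']
      _ ≤ (1 + C₁ * C₂ / (c₁ * c₂) * k ^ 3) * (y * g₂ c'⁻¹) := by
          refine mul_le_mul_of_nonneg_right (by linarith) ?_
          positivity
      _ = (1 + C₁ * C₂ / (c₁ * c₂) * k ^ 3) * eF g₂ c' := rfl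

end Aux

namespace Aux

theorem lintegral_half_scale (F : ℝ → ℝ≥0∞) (hF : Measurable F) :
    ∫⁻ t in Set.Ioi (0:ℝ), F (t/2) = 2 * ∫⁻ s in Set.Ioi (0:ℝ), F s := by
  have hpre : (fun t : ℝ => 2⁻¹ * t) ⁻¹' (Set.Ioi 0) = Set.Ioi (0:ℝ) := by
    ext t; simp only [Set.mem_preimage, Set.mem_Ioi]
    constructor <;> intro h <;> nlinarith
  have hmap : Measure.map (fun t : ℝ => 2⁻¹ * t) (volume.restrict (Set.Ioi (0:ℝ)))
      = ((2:ℝ≥0∞) • volume).restrict (Set.Ioi (0:ℝ)) := by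
    conv_lhs => rw [← hpre]
    rw [← Measure.restrict_map (measurable_const_mul _) measurableSet_Ioi]
    congr 1
    rw [Real.map_volume_mul_left (by norm_num : (2⁻¹:ℝ) ≠ 0)]
    norm_num
  calc ∫⁻ t in Set.Ioi (0:ℝ), F (t/2)
      = ∫⁻ t in Set.Ioi (0:ℝ), F (2⁻¹ * t) := by
        congr 1; ext t; rw [div_eq_inv_mul]
    _ = ∫⁻ x, F x ∂(Measure.map (fun t : ℝ => 2⁻¹ * t) (volume.restrict (Set.Ioi (0:ℝ)))) :=
        (lintegral_map hF (measurable_const_mul _)).symm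
    _ = ∫⁻ x, F x ∂(((2:ℝ≥0∞) • volume).restrict (Set.Ioi (0:ℝ))) := by rw [hmap]
    _ = 2 * ∫⁻ s in Set.Ioi (0:ℝ), F s := by
        rw [Measure.restrict_smul, lintegral_smul_measure, smul_eq_mul]

theorem rpow_add_le {x y q : ℝ} (hx : 0 ≤ x) (hy : 0 ≤ y) (hq : 0 ≤ q) :
    (x + y) ^ q ≤ 2 ^ q * (x ^ q + y ^ q) := by
  have h1 : x + y ≤ 2 * max x y := by
    rcases le_total x y with h | h
    · rw [max_eq_right h]; linarith
    · rw [max_eq_left h]; linarith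
  have hmax : 0 ≤ max x y := le_max_of_le_left hx
  calc (x + y) ^ q ≤ (2 * max x y) ^ q := Real.rpow_le_rpow (by positivity) h1 hq
    _ = 2 ^ q * (max x y) ^ q := Real.mul_rpow (by norm_num) hmax
    _ ≤ 2 ^ q * (x ^ q + y ^ q) := by
        refine mul_le_mul_of_nonneg_left ?_ (Real.rpow_nonneg (by norm_num) _)
        rcases le_total x y with h | h
        · rw [max_eq_right h]
          have := Real.rpow_nonneg hx q; linarith
        · rw [max_eq_left h]
          have := Real.rpow_nonneg hy q; linarith

theorem ofReal_scale_le {t a a' C q : ℝ} (ht : 0 < t) (hq : 0 < q) (ha : 0 ≤ a)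
    (hC : 0 ≤ C) (ha' : 0 ≤ a') (hle : a ≤ C * a') :
    ENNReal.ofReal ((t * a) ^ q / t) ≤ ENNReal.ofReal (C ^ q) * ENNReal.ofReal ((t * a') ^ q / t) := by
  rw [← ENNReal.ofReal_mul (Real.rpow_nonneg hC _)]
  refine ENNReal.ofReal_le_ofReal ?_
  have h1 : (t * a) ^ q ≤ (C * (t * a')) ^ q := by
    refine Real.rpow_le_rpow (by positivity) ?_ hq.le
    calc t * a ≤ t * (C * a') := mul_le_mul_of_nonneg_left hle ht.le
      _ = C * (t * a') := by ring
  calc (t * a) ^ q / t ≤ (C * (t * a')) ^ q / t := by gcongr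
    _ = C ^ q * ((t * a') ^ q / t) := by
        rw [Real.mul_rpow hC (by positivity), mul_div_assoc]

end Aux


section Main

open Aux

set_option maxHeartbeats 2000000 in
/-- Dominated convergence theorem for variable Lorentz–Karamata spaces. -/
theorem vLKNorm_dominated_convergence (μ : Measure Ω) [IsProbabilityMeasure μ]
    (p : Ω → ℝ) (pl pu : ℝ) (hpl : 0 < pl) (hple : pl ≤ pu)
    (hp : ∀ᵐ ω ∂μ, pl ≤ p ω ∧ p ω ≤ pu)
    (q : ℝ) (hq : 0 < q) (b : ℝ → ℝ) (hb : SlowlyVarying b)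
    (h : ℕ → Ω → ℝ) (f g : Ω → ℝ)
    (hhm : ∀ n, Measurable (h n)) (hfm : Measurable f) (hgm : Measurable g)
    (hhL : ∀ n, vLKNorm μ p (ENNReal.ofReal q) b (h n) < ∞)
    (hfL : vLKNorm μ p (ENNReal.ofReal q) b f < ∞)
    (hgL : vLKNorm μ p (ENNReal.ofReal q) b g < ∞)
    (hconv : ∀ᵐ ω ∂μ, Filter.Tendsto (fun n => h n ω) Filter.atTop (nhds (f ω)))
    (hdom : ∀ n, ∀ᵐ ω ∂μ, |h n ω| ≤ g ω) :
    Filter.Tendsto (fun n => vLKNorm μ p (ENNReal.ofReal q) b (fun ω => h n ω - f ω))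
      Filter.atTop (nhds 0) := by
  classical
  obtain ⟨hbpos, hSV⟩ := hb
  obtain ⟨⟨g₁, hg₁, c₁, hc₁, C₁, hC₁, hbd₁⟩, ⟨g₂, hg₂, c₂, hc₂, C₂, hC₂, hbd₂⟩⟩ :=
    hSV 2⁻¹ (by norm_num)
  have hd : SVData b g₁ g₂ c₁ C₁ c₂ C₂ :=
    ⟨hbpos, hg₁, hg₂, hc₁, hC₁, hc₂, hC₂, hbd₁, hbd₂⟩
  have hp0 : ∀ᵐ ω ∂μ, 0 < p ω := hp.mono fun ω hω => lt_of_lt_of_le hpl hω.1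
  have hpu : 0 < pu := lt_of_lt_of_le hpl hple
  -- distribution-type quantities
  set c : (Ω → ℝ) → ℝ → ℝ := fun u t => chiNorm μ p {ω | t < |u ω|} with hcdef
  have c_anti : ∀ u : Ω → ℝ, Antitone (c u) := by
    intro u t₁ t₂ h12
    exact chiNorm_mono_ae hp0 (Filter.Eventually.of_forall fun ω hω => lt_of_le_of_lt h12 hω)
  have c_nonneg : ∀ (u : Ω → ℝ) (t : ℝ), 0 ≤ c u t := fun u t => chiNorm_nonneg μ p _
  have c_le_one : ∀ (u : Ω → ℝ) (t : ℝ), c u t ≤ 1 := fun u t => chiNorm_le_one hp0 _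
  set w : (Ω → ℝ) → ℝ → ℝ := fun u t => if 0 < c u t then g₂ (c u t)⁻¹ else 0 with hwdef
  have w_anti : ∀ u : Ω → ℝ, Antitone (w u) := by
    intro u t₁ t₂ h12
    by_cases h2 : 0 < c u t₂
    · have h1 : 0 < c u t₁ := lt_of_lt_of_le h2 (c_anti u h12)
      simp only [hwdef, if_pos h1, if_pos h2]
      have hi1 : 1 ≤ (c u t₁)⁻¹ := one_le_inv_of h1 (c_le_one u t₁)
      have hi2 : (c u t₁)⁻¹ ≤ (c u t₂)⁻¹ := by
        have := c_anti u h12; gcongr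
      exact hd.hg₂ (Set.mem_Ici.mpr hi1) (Set.mem_Ici.mpr (hi1.trans hi2)) hi2
    · simp only [hwdef, if_neg h2]
      by_cases h1 : 0 < c u t₁
      · simp only [if_pos h1]
        exact (hd.g₂_pos (one_le_inv_of h1 (c_le_one u t₁))).le
      · simp only [if_neg h1]; exact le_rfl
  have e_eq : ∀ (u : Ω → ℝ) (t : ℝ), eF g₂ (c u t) = (c u t) ^ (2⁻¹:ℝ) * w u t := by
    intro u t
    by_cases h0 : 0 < c u t
    · simp only [eF, hwdef, if_pos h0]
    · have hz : c u t = 0 := le_antisymm (not_lt.mp h0) (c_nonneg u t)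
      rw [hz, eF_zero, Real.zero_rpow (by norm_num : (2⁻¹:ℝ) ≠ 0), zero_mul]
  -- the envelope
  set Φ : (Ω → ℝ) → ℝ → ℝ≥0∞ := fun u t => ENNReal.ofReal ((t * eF g₂ (c u t)) ^ q / t)
    with hΦdef
  have Φ_meas : ∀ u : Ω → ℝ, Measurable (Φ u) := by
    intro u
    have hrw : Φ u = fun t => ENNReal.ofReal ((t * ((c u t) ^ (2⁻¹:ℝ) * w u t)) ^ q / t) :=
      funext fun t => by simp only [hΦdef]; rw [e_eq u t]
    rw [hrw]
    have m1 : Measurable fun t : ℝ => (c u t) ^ (2⁻¹:ℝ) :=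
      (Real.continuous_rpow_const (by norm_num)).measurable.comp (c_anti u).measurable
    have m2 : Measurable (w u) := (w_anti u).measurable
    have m3 : Measurable fun t : ℝ => t * ((c u t) ^ (2⁻¹:ℝ) * w u t) :=
      measurable_id.mul (m1.mul m2)
    have m4 : Measurable fun t : ℝ => (t * ((c u t) ^ (2⁻¹:ℝ) * w u t)) ^ q :=
      (Real.continuous_rpow_const hq.le).measurable.comp m3
    exact ENNReal.measurable_ofReal.comp (m4.div measurable_id)
  -- formula for the norm
  have hQ : (ENNReal.ofReal q) ≠ ∞ := ENNReal.ofReal_ne_top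
  have hQr : (ENNReal.ofReal q).toReal = q := ENNReal.toReal_ofReal hq.le
  have norm_eq : ∀ u : Ω → ℝ, vLKNorm μ p (ENNReal.ofReal q) b u
      = (∫⁻ t in Set.Ioi (0:ℝ),
          ENNReal.ofReal ((t * c u t * gammaB b (c u t)) ^ q / t)) ^ (1/q) := by
    intro u
    rw [vLKNorm, if_neg hQ, hQr]
  -- comparison between the true integrand and the envelope
  have height_nonneg : ∀ (u : Ω → ℝ) (t : ℝ), 0 ≤ c u t * gammaB b (c u t) := by
    intro u t
    rcases eq_or_lt_of_le (c_nonneg u t) with hz | h0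
    · rw [← hz, zero_mul]
    · have hmax : max (c u t) (c u t)⁻¹ = (c u t)⁻¹ :=
        max_eq_right ((c_le_one u t).trans (one_le_inv_of h0 (c_le_one u t)))
      rw [gammaB, hmax]
      exact le_of_lt (mul_pos h0 (hbpos _ (one_le_inv_of h0 (c_le_one u t))))
  have gamma_eq : ∀ (u : Ω → ℝ) (t : ℝ), 0 < c u t → gammaB b (c u t) = b (c u t)⁻¹ := by
    intro u t h0
    rw [gammaB, max_eq_right ((c_le_one u t).trans (one_le_inv_of h0 (c_le_one u t)))]
  have cmp_upper : ∀ (u : Ω → ℝ) (t : ℝ), 0 < t →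
      ENNReal.ofReal ((t * c u t * gammaB b (c u t)) ^ q / t)
        ≤ ENNReal.ofReal (C₂ ^ q) * Φ u t := by
    intro u t ht
    rw [mul_assoc, hΦdef]
    refine ofReal_scale_le ht hq (height_nonneg u t) hC₂.le
      (eF_nonneg hd (c_nonneg u t) (c_le_one u t)) ?_
    rcases eq_or_lt_of_le (c_nonneg u t) with hz | h0
    · rw [← hz, zero_mul, eF_zero, mul_zero]
    · rw [gamma_eq u t h0]
      exact phi_le hd h0 (c_le_one u t)
  have cmp_lower : ∀ (u : Ω → ℝ) (t : ℝ), 0 < t →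
      Φ u t ≤ ENNReal.ofReal (c₂⁻¹ ^ q)
        * ENNReal.ofReal ((t * c u t * gammaB b (c u t)) ^ q / t) := by
    intro u t ht
    rw [mul_assoc, hΦdef]
    refine ofReal_scale_le ht hq (eF_nonneg hd (c_nonneg u t) (c_le_one u t))
      (by positivity) (height_nonneg u t) ?_
    rcases eq_or_lt_of_le (c_nonneg u t) with hz | h0
    · rw [← hz, eF_zero, zero_mul, mul_zero]
    · rw [gamma_eq u t h0]
      have := phi_ge hd h0 (c_le_one u t)
      rw [← mul_le_mul_iff_right₀ hc₂]
      calc c₂ * eF g₂ (c u t) ≤ c u t * b (c u t)⁻¹ := this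
        _ = c₂ * (c₂⁻¹ * (c u t * b (c u t)⁻¹)) := by field_simp
  -- finiteness of ∫ Φ u for u with finite norm
  have int_I_lt_top : ∀ u : Ω → ℝ, vLKNorm μ p (ENNReal.ofReal q) b u < ∞ →
      (∫⁻ t in Set.Ioi (0:ℝ),
        ENNReal.ofReal ((t * c u t * gammaB b (c u t)) ^ q / t)) ≠ ∞ := by
    intro u hu
    intro hcon
    rw [norm_eq u, hcon, ENNReal.top_rpow_of_pos (by positivity)] at hu
    exact (lt_irrefl _ hu)
  have int_Phi_lt_top : ∀ u : Ω → ℝ, vLKNorm μ p (ENNReal.ofReal q) b u < ∞ →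
      (∫⁻ t in Set.Ioi (0:ℝ), Φ u t) ≠ ∞ := by
    intro u hu
    have hle : (∫⁻ t in Set.Ioi (0:ℝ), Φ u t) ≤ ENNReal.ofReal (c₂⁻¹ ^ q)
        * ∫⁻ t in Set.Ioi (0:ℝ),
            ENNReal.ofReal ((t * c u t * gammaB b (c u t)) ^ q / t) := by
      rw [← lintegral_const_mul' _ _ ENNReal.ofReal_ne_top]
      refine lintegral_mono_ae ?_
      filter_upwards [ae_restrict_mem measurableSet_Ioi] with t ht
      exact cmp_lower u t ht
    refine ne_top_of_le_ne_top ?_ hle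
    exact ENNReal.mul_ne_top ENNReal.ofReal_ne_top (int_I_lt_top u hu)
  -- domination by G
  set G : Ω → ℝ := fun ω => g ω + abs (f ω) with hGdef
  have hGdomall : ∀ n, ∀ᵐ ω ∂μ, |h n ω - f ω| ≤ G ω := by
    intro n
    filter_upwards [hdom n] with ω hω
    calc |h n ω - f ω| = |h n ω + -f ω| := by rw [sub_eq_add_neg]
      _ ≤ |h n ω| + |-f ω| := abs_add_le _ _
      _ = |h n ω| + abs (f ω) := by rw [abs_neg]
      _ ≤ g ω + abs (f ω) := by linarith
  have c_le_G : ∀ (n : ℕ) (t : ℝ), c (fun ω => h n ω - f ω) t ≤ c G t := by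
    intro n t
    refine chiNorm_mono_ae hp0 ?_
    filter_upwards [hGdomall n] with ω hω ht
    exact lt_of_lt_of_le ht (hω.trans (le_abs_self _))
  have c_G_le : ∀ t : ℝ, c G t ≤ 2 ^ (pl⁻¹:ℝ) * (c g (t/2) + c f (t/2)) := by
    intro t
    have hsub : ∀ ω, ω ∈ {ω | t < |G ω|} →
        ω ∈ ({ω | t/2 < abs (g ω)} ∪ {ω | t/2 < abs (f ω)}) := by
      intro ω hω
      simp only [Set.mem_setOf_eq, hGdef] at hω
      by_contra hcon
      simp only [Set.mem_union, Set.mem_setOf_eq] at hcon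
      push_neg at hcon
      have h1 : |g ω + abs (f ω)| ≤ abs (g ω) + abs (f ω) := (abs_add_le _ _).trans (by rw [abs_abs])
      linarith [hcon.1, hcon.2]
    calc c G t ≤ chiNorm μ p ({ω | t/2 < abs (g ω)} ∪ {ω | t/2 < abs (f ω)}) :=
          chiNorm_mono_ae hp0 (Filter.Eventually.of_forall hsub)
      _ ≤ 2 ^ (pl⁻¹:ℝ) * (chiNorm μ p {ω | t/2 < abs (g ω)} + chiNorm μ p {ω | t/2 < abs (f ω)}) :=
          chiNorm_union_le hpl hp (measurableSet_lt measurable_const hgm.abs)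
      _ = 2 ^ (pl⁻¹:ℝ) * (c g (t/2) + c f (t/2)) := rfl
  -- step C : envelope comparison
  have hKm1 : (1:ℝ) ≤ 2 ^ (pl⁻¹:ℝ) := by
    calc (1:ℝ) = 2 ^ (0:ℝ) := (Real.rpow_zero 2).symm
      _ ≤ 2 ^ (pl⁻¹:ℝ) := Real.rpow_le_rpow_of_exponent_le (by norm_num) (by positivity)
  set Km : ℝ := 2 * 2 ^ (pl⁻¹:ℝ) with hKmdef
  have hKm : (1:ℝ) ≤ Km := by rw [hKmdef]; nlinarith
  set D₀ : ℝ := 1 + C₁ * C₂ / (c₁ * c₂) * (Km ^ (2⁻¹:ℝ)) ^ 3 with hD₀def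
  have hD₀1 : (1:ℝ) ≤ D₀ := by
    rw [hD₀def]
    have h0 : (0:ℝ) < Km := lt_of_lt_of_le one_pos hKm
    have : (0:ℝ) ≤ C₁ * C₂ / (c₁ * c₂) * (Km ^ (2⁻¹:ℝ)) ^ 3 := by positivity
    linarith
  have hD₀0 : (0:ℝ) < D₀ := lt_of_lt_of_le one_pos hD₀1
  have eF_G_le : ∀ t : ℝ, eF g₂ (c G t) ≤ D₀ * (eF g₂ (c g (t/2)) + eF g₂ (c f (t/2))) := by
    intro t
    have hea : 0 ≤ eF g₂ (c g (t/2)) := eF_nonneg hd (c_nonneg g _) (c_le_one g _)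
    have hea' : 0 ≤ eF g₂ (c f (t/2)) := eF_nonneg hd (c_nonneg f _) (c_le_one f _)
    rcases eq_or_lt_of_le (c_nonneg G t) with hm0 | hm0
    · rw [← hm0, eF_zero]; positivity
    · have hsum : c G t ≤ Km * max (c g (t/2)) (c f (t/2)) := by
        have h2 : c g (t/2) + c f (t/2) ≤ 2 * max (c g (t/2)) (c f (t/2)) := by
          rcases le_total (c g (t/2)) (c f (t/2)) with hcase | hcase
          · rw [max_eq_right hcase]; linarith
          · rw [max_eq_left hcase]; linarith
        calc c G t ≤ 2 ^ (pl⁻¹:ℝ) * (c g (t/2) + c f (t/2)) := c_G_le t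
          _ ≤ 2 ^ (pl⁻¹:ℝ) * (2 * max (c g (t/2)) (c f (t/2))) := by
              refine mul_le_mul_of_nonneg_left h2 (by positivity)
          _ = Km * max (c g (t/2)) (c f (t/2)) := by rw [hKmdef]; ring
      rcases le_total (c g (t/2)) (c f (t/2)) with hcase | hcase
      · rw [max_eq_right hcase] at hsum
        have ha'0 : 0 < c f (t/2) := by
          by_contra hcon
          push_neg at hcon
          nlinarith [lt_of_lt_of_le hm0 hsum, lt_of_lt_of_le one_pos hKm]
        have hdb := eF_doubling hd hKm hm0 ha'0 (c_le_one G t) (c_le_one f _) hsum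
        calc eF g₂ (c G t) ≤ D₀ * eF g₂ (c f (t/2)) := hdb
          _ ≤ D₀ * (eF g₂ (c g (t/2)) + eF g₂ (c f (t/2))) := by
              refine mul_le_mul_of_nonneg_left (by linarith) hD₀0.le
      · rw [max_eq_left hcase] at hsum
        have ha0 : 0 < c g (t/2) := by
          by_contra hcon
          push_neg at hcon
          nlinarith [lt_of_lt_of_le hm0 hsum, lt_of_lt_of_le one_pos hKm]
        have hdb := eF_doubling hd hKm hm0 ha0 (c_le_one G t) (c_le_one g _) hsum
        calc eF g₂ (c G t) ≤ D₀ * eF g₂ (c g (t/2)) := hdb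
          _ ≤ D₀ * (eF g₂ (c g (t/2)) + eF g₂ (c f (t/2))) := by
              refine mul_le_mul_of_nonneg_left (by linarith) hD₀0.le
  -- the DCT bound
  set bound : ℝ → ℝ≥0∞ := fun t => ENNReal.ofReal ((2*D₀) ^ q) *
      (ENNReal.ofReal ((t * eF g₂ (c g (t/2))) ^ q / t)
        + ENNReal.ofReal ((t * eF g₂ (c f (t/2))) ^ q / t)) with hbounddef
  have ΦG_le_bound : ∀ t : ℝ, 0 < t → Φ G t ≤ bound t := by
    intro t ht
    have hea : 0 ≤ eF g₂ (c g (t/2)) := eF_nonneg hd (c_nonneg g _) (c_le_one g _)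
    have hea' : 0 ≤ eF g₂ (c f (t/2)) := eF_nonneg hd (c_nonneg f _) (c_le_one f _)
    have heG : 0 ≤ eF g₂ (c G t) := eF_nonneg hd (c_nonneg G _) (c_le_one G _)
    have h1 : (t * eF g₂ (c G t)) ^ q / t
        ≤ (2*D₀) ^ q * ((t * eF g₂ (c g (t/2))) ^ q / t + (t * eF g₂ (c f (t/2))) ^ q / t) := by
      have step1 : (t * eF g₂ (c G t)) ^ q
          ≤ (D₀ * (t * eF g₂ (c g (t/2)) + t * eF g₂ (c f (t/2)))) ^ q := by
        refine Real.rpow_le_rpow (by positivity) ?_ hq.le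
        calc t * eF g₂ (c G t) ≤ t * (D₀ * (eF g₂ (c g (t/2)) + eF g₂ (c f (t/2)))) :=
              mul_le_mul_of_nonneg_left (eF_G_le t) ht.le
          _ = D₀ * (t * eF g₂ (c g (t/2)) + t * eF g₂ (c f (t/2))) := by ring
      have step2 : (D₀ * (t * eF g₂ (c g (t/2)) + t * eF g₂ (c f (t/2)))) ^ q
          ≤ D₀ ^ q * (2 ^ q * ((t * eF g₂ (c g (t/2))) ^ q + (t * eF g₂ (c f (t/2))) ^ q)) := by
        rw [Real.mul_rpow hD₀0.le (by positivity)]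
        exact mul_le_mul_of_nonneg_left
          (rpow_add_le (by positivity) (by positivity) hq.le)
          (Real.rpow_nonneg hD₀0.le _)
      calc (t * eF g₂ (c G t)) ^ q / t
          ≤ (D₀ ^ q * (2 ^ q * ((t * eF g₂ (c g (t/2))) ^ q + (t * eF g₂ (c f (t/2))) ^ q))) / t := by
            gcongr
            exact step1.trans step2
        _ = (2*D₀) ^ q * ((t * eF g₂ (c g (t/2))) ^ q / t + (t * eF g₂ (c f (t/2))) ^ q / t) := by
            rw [Real.mul_rpow (by norm_num) hD₀0.le]
            field_simp
    calc Φ G t = ENNReal.ofReal ((t * eF g₂ (c G t)) ^ q / t) := rfl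
      _ ≤ ENNReal.ofReal ((2*D₀) ^ q * ((t * eF g₂ (c g (t/2))) ^ q / t
            + (t * eF g₂ (c f (t/2))) ^ q / t)) := ENNReal.ofReal_le_ofReal h1
      _ ≤ bound t := by
          rw [hbounddef, ENNReal.ofReal_mul (by positivity),
            ENNReal.ofReal_add (by positivity) (by positivity)]
  -- scaling identity and integrability of the bound
  have half_eq : ∀ (u : Ω → ℝ) (t : ℝ), 0 < t →
      ENNReal.ofReal ((t * eF g₂ (c u (t/2))) ^ q / t)
        = ENNReal.ofReal (2 ^ (q-1)) * Φ u (t/2) := by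
    intro u t ht
    have hs : 0 < t/2 := by linarith
    have hE : 0 ≤ eF g₂ (c u (t/2)) := eF_nonneg hd (c_nonneg u _) (c_le_one u _)
    simp only [hΦdef]
    rw [← ENNReal.ofReal_mul (by positivity : (0:ℝ) ≤ (2:ℝ) ^ (q-1))]
    congr 1
    rw [show t * eF g₂ (c u (t/2)) = 2 * ((t/2) * eF g₂ (c u (t/2))) by ring,
      Real.mul_rpow (by norm_num) (by positivity),
      Real.rpow_sub (by norm_num : (0:ℝ) < 2), Real.rpow_one]
    field_simp
  have env_meas : ∀ u : Ω → ℝ,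
      Measurable fun t : ℝ => ENNReal.ofReal ((t * eF g₂ (c u (t/2))) ^ q / t) := by
    intro u
    have ha : Antitone fun t : ℝ => c u (t/2) := fun a a' haa => c_anti u (by linarith)
    have hwa : Antitone fun t : ℝ => w u (t/2) := fun a a' haa => w_anti u (by linarith)
    have hrw : (fun t : ℝ => ENNReal.ofReal ((t * eF g₂ (c u (t/2))) ^ q / t))
        = fun t => ENNReal.ofReal ((t * ((c u (t/2)) ^ (2⁻¹:ℝ) * w u (t/2))) ^ q / t) :=
      funext fun t => by rw [e_eq u (t/2)]
    rw [hrw]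
    exact ENNReal.measurable_ofReal.comp
      (((Real.continuous_rpow_const hq.le).measurable.comp
        (measurable_id.mul (((Real.continuous_rpow_const (by norm_num)).measurable.comp
          ha.measurable).mul hwa.measurable))).div measurable_id)
  have int_halves : ∀ u : Ω → ℝ,
      (∫⁻ t in Set.Ioi (0:ℝ), ENNReal.ofReal ((t * eF g₂ (c u (t/2))) ^ q / t))
        = ENNReal.ofReal (2 ^ (q-1)) * (2 * ∫⁻ s in Set.Ioi (0:ℝ), Φ u s) := by
    intro u
    calc (∫⁻ t in Set.Ioi (0:ℝ), ENNReal.ofReal ((t * eF g₂ (c u (t/2))) ^ q / t))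
        = ∫⁻ t in Set.Ioi (0:ℝ), ENNReal.ofReal (2 ^ (q-1)) * Φ u (t/2) := by
          refine lintegral_congr_ae ?_
          filter_upwards [ae_restrict_mem measurableSet_Ioi] with t ht
          exact half_eq u t ht
      _ = ENNReal.ofReal (2 ^ (q-1)) * ∫⁻ t in Set.Ioi (0:ℝ), Φ u (t/2) :=
          lintegral_const_mul' _ _ ENNReal.ofReal_ne_top
      _ = ENNReal.ofReal (2 ^ (q-1)) * (2 * ∫⁻ s in Set.Ioi (0:ℝ), Φ u s) := by
          rw [lintegral_half_scale _ (Φ_meas u)]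
  have bound_fin : (∫⁻ t in Set.Ioi (0:ℝ), bound t) ≠ ∞ := by
    simp only [hbounddef]
    rw [lintegral_const_mul' _ _ ENNReal.ofReal_ne_top]
    refine ENNReal.mul_ne_top ENNReal.ofReal_ne_top ?_
    rw [lintegral_add_left (env_meas g), int_halves g, int_halves f]
    refine ENNReal.add_ne_top.mpr ⟨?_, ?_⟩
    · exact ENNReal.mul_ne_top ENNReal.ofReal_ne_top
        (ENNReal.mul_ne_top (by norm_num) (int_Phi_lt_top g hgL))
    · exact ENNReal.mul_ne_top ENNReal.ofReal_ne_top
        (ENNReal.mul_ne_top (by norm_num) (int_Phi_lt_top f hfL))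
  -- pointwise convergence of the envelopes
  have hTIM : TendstoInMeasure μ h Filter.atTop f :=
    tendstoInMeasure_of_tendsto_ae (fun n => (hhm n).aestronglyMeasurable) hconv
  have lim_pt : ∀ t : ℝ, 0 < t →
      Filter.Tendsto (fun n => Φ (fun ω => h n ω - f ω) t) Filter.atTop (𝓝 0) := by
    intro t ht
    have hμn : Filter.Tendsto (fun n => μ {ω | t < |h n ω - f ω|}) Filter.atTop (𝓝 0) := by
      refine tendsto_of_tendsto_of_tendsto_of_le_of_le tendsto_const_nhds (hTIM (ENNReal.ofReal t) (ENNReal.ofReal_pos.mpr ht))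
        (fun n => zero_le) (fun n => measure_mono ?_)
      intro ω hω
      simp only [Set.mem_setOf_eq] at hω ⊢
      rw [edist_dist, Real.dist_eq]
      exact ENNReal.ofReal_le_ofReal (le_of_lt hω)
    have hcn : Filter.Tendsto (fun n => c (fun ω => h n ω - f ω) t) Filter.atTop (𝓝 0) := by
      rw [Metric.tendsto_atTop]
      intro ε hε
      set ε' : ℝ := min (ε/2) 1 with hε'def
      have hε'0 : 0 < ε' := lt_min (by linarith) one_pos
      have hε'1 : ε' ≤ 1 := min_le_right _ _
      have hε'ε : ε' < ε := lt_of_le_of_lt (min_le_left _ _) (by linarith)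
      have hofr : (0:ℝ≥0∞) < ENNReal.ofReal (ε' ^ pu) :=
        ENNReal.ofReal_pos.mpr (Real.rpow_pos_of_pos hε'0 _)
      have hev : ∀ᶠ n in Filter.atTop, μ {ω | t < |h n ω - f ω|} < ENNReal.ofReal (ε' ^ pu) :=
        hμn.eventually_lt_const hofr
      obtain ⟨N, hN⟩ := Filter.eventually_atTop.mp hev
      refine ⟨N, fun n hn => ?_⟩
      have hle : c (fun ω => h n ω - f ω) t ≤ ε' :=
        chiNorm_le_of_measure hpl hple hp
          (measurableSet_lt measurable_const ((hhm n).sub hfm).abs) hε'0 hε'1 (hN n hn).le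
      rw [Real.dist_eq, sub_zero, abs_of_nonneg (c_nonneg _ _)]
      exact lt_of_le_of_lt hle hε'ε
    have hW0 : 0 < g₂ 1 := hd.g₂_pos le_rfl
    have hupper : ∀ n, (t * eF g₂ (c (fun ω => h n ω - f ω) t)) ^ q / t
        ≤ (t * ((c (fun ω => h n ω - f ω) t) ^ (2⁻¹:ℝ) * g₂ 1)) ^ q / t := by
      intro n
      have h1 := eF_le_sqrt hd (c_nonneg (fun ω => h n ω - f ω) t)
        (c_le_one (fun ω => h n ω - f ω) t)
      have h2 : t * eF g₂ (c (fun ω => h n ω - f ω) t)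
          ≤ t * ((c (fun ω => h n ω - f ω) t) ^ (2⁻¹:ℝ) * g₂ 1) :=
        mul_le_mul_of_nonneg_left h1 ht.le
      have h0 : 0 ≤ t * eF g₂ (c (fun ω => h n ω - f ω) t) :=
        mul_nonneg ht.le (eF_nonneg hd (c_nonneg _ _) (c_le_one _ _))
      have h3 := Real.rpow_le_rpow h0 h2 hq.le
      exact (div_le_div_iff_of_pos_right ht).mpr h3
    have hlower : ∀ n, 0 ≤ (t * eF g₂ (c (fun ω => h n ω - f ω) t)) ^ q / t := by
      intro n
      have h0 : 0 ≤ t * eF g₂ (c (fun ω => h n ω - f ω) t) :=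
        mul_nonneg ht.le (eF_nonneg hd (c_nonneg _ _) (c_le_one _ _))
      exact div_nonneg (Real.rpow_nonneg h0 q) ht.le
    have hupper_tend : Filter.Tendsto
        (fun n => (t * ((c (fun ω => h n ω - f ω) t) ^ (2⁻¹:ℝ) * g₂ 1)) ^ q / t)
        Filter.atTop (𝓝 0) := by
      have inner : Continuous fun z : ℝ => t * (z ^ (2⁻¹:ℝ) * g₂ 1) :=
        continuous_const.mul ((Real.continuous_rpow_const (by norm_num)).mul continuous_const)
      have t1 : Filter.Tendsto
          (fun n => t * ((c (fun ω => h n ω - f ω) t) ^ (2⁻¹:ℝ) * g₂ 1))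
          Filter.atTop (𝓝 0) := by
        have := (inner.tendsto 0).comp hcn
        simpa [Function.comp_def, Real.zero_rpow (by norm_num : (2⁻¹:ℝ) ≠ 0)] using this
      have t2 : Filter.Tendsto
          (fun n => (t * ((c (fun ω => h n ω - f ω) t) ^ (2⁻¹:ℝ) * g₂ 1)) ^ q)
          Filter.atTop (𝓝 0) := by
        have hcont := Real.continuousAt_rpow_const 0 q (Or.inr hq.le)
        have := hcont.tendsto.comp t1
        simpa [Function.comp_def, Real.zero_rpow hq.ne'] using this
      simpa using t2.div_const t
    have hr := squeeze_zero hlower hupper hupper_tend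
    have := (ENNReal.continuous_ofReal.tendsto 0).comp hr
    simpa [Function.comp_def, hΦdef] using this
  -- domination of the envelopes
  have Φn_le : ∀ (n : ℕ) (t : ℝ), 0 < t → Φ (fun ω => h n ω - f ω) t ≤ bound t := by
    intro n t ht
    refine le_trans ?_ (ΦG_le_bound t ht)
    simp only [hΦdef]
    refine ENNReal.ofReal_le_ofReal ?_
    have h1 : eF g₂ (c (fun ω => h n ω - f ω) t) ≤ eF g₂ (c G t) :=
      eF_mono hd (c_nonneg _ _) (c_le_G n t) (c_le_one G t)
    have h2 : t * eF g₂ (c (fun ω => h n ω - f ω) t) ≤ t * eF g₂ (c G t) :=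
      mul_le_mul_of_nonneg_left h1 ht.le
    have h0 : 0 ≤ t * eF g₂ (c (fun ω => h n ω - f ω) t) :=
      mul_nonneg ht.le (eF_nonneg hd (c_nonneg _ _) (c_le_one _ _))
    have h3 := Real.rpow_le_rpow h0 h2 hq.le
    exact (div_le_div_iff_of_pos_right ht).mpr h3
  -- dominated convergence
  have hDCT : Filter.Tendsto
      (fun n => ∫⁻ t in Set.Ioi (0:ℝ), Φ (fun ω => h n ω - f ω) t)
      Filter.atTop (𝓝 0) := by
    have := tendsto_lintegral_of_dominated_convergence
      (μ := volume.restrict (Set.Ioi (0:ℝ))) (F := fun n t => Φ (fun ω => h n ω - f ω) t)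
      (f := fun _ => (0:ℝ≥0∞)) bound (fun n => Φ_meas _)
      (fun n => by
        filter_upwards [ae_restrict_mem measurableSet_Ioi] with t ht
        exact Φn_le n t ht)
      bound_fin
      (by
        filter_upwards [ae_restrict_mem measurableSet_Ioi] with t ht
        exact lim_pt t ht)
    simpa using this
  -- comparison and conclusion
  have int_le : ∀ n, (∫⁻ t in Set.Ioi (0:ℝ),
        ENNReal.ofReal ((t * c (fun ω => h n ω - f ω) t
          * gammaB b (c (fun ω => h n ω - f ω) t)) ^ q / t))
      ≤ ENNReal.ofReal (C₂ ^ q) * ∫⁻ t in Set.Ioi (0:ℝ), Φ (fun ω => h n ω - f ω) t := by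
    intro n
    rw [← lintegral_const_mul' _ _ ENNReal.ofReal_ne_top]
    refine lintegral_mono_ae ?_
    filter_upwards [ae_restrict_mem measurableSet_Ioi] with t ht
    exact cmp_upper _ t ht
  have hItend : Filter.Tendsto (fun n => ∫⁻ t in Set.Ioi (0:ℝ),
      ENNReal.ofReal ((t * c (fun ω => h n ω - f ω) t
        * gammaB b (c (fun ω => h n ω - f ω) t)) ^ q / t)) Filter.atTop (𝓝 0) := by
    refine tendsto_of_tendsto_of_tendsto_of_le_of_le tendsto_const_nhds ?_
      (fun n => zero_le) int_le
    have := ENNReal.Tendsto.const_mul (a := ENNReal.ofReal (C₂ ^ q)) hDCT (Or.inr ENNReal.ofReal_ne_top)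
    simpa using this
  have hfinal : Filter.Tendsto (fun n => (∫⁻ t in Set.Ioi (0:ℝ),
      ENNReal.ofReal ((t * c (fun ω => h n ω - f ω) t
        * gammaB b (c (fun ω => h n ω - f ω) t)) ^ q / t)) ^ (1/q))
      Filter.atTop (𝓝 0) := by
    have hcont : Continuous fun x : ℝ≥0∞ => x ^ (1/q) := ENNReal.continuous_rpow_const
    have := (hcont.tendsto 0).comp hItend
    simpa [Function.comp_def, one_div, ENNReal.zero_rpow_of_pos (by positivity : (0:ℝ) < q⁻¹)] using this
  have hrw : (fun n => vLKNorm μ p (ENNReal.ofReal q) b (fun ω => h n ω - f ω))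
      = fun n => (∫⁻ t in Set.Ioi (0:ℝ),
        ENNReal.ofReal ((t * c (fun ω => h n ω - f ω) t
          * gammaB b (c (fun ω => h n ω - f ω) t)) ^ q / t)) ^ (1/q) :=
    funext fun n => norm_eq _
  rw [hrw]
  exact hfinal


end Main
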